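/- arXiv:1807.03638 — 3 statements merged into one kernel-verified Lean document; each statement's English description precedes it below -/
import Mathlib

section
/- Let (R, α) be a Hom-associative conformal superalgebra. Then the λ-bracket defined by [a_λ b] := a_λ b − (−1)^{|a||b|} b_{−λ−∂} a for all homogeneous a, b ∈ R makes (R, α) a Hom-Lie conformal superalgebra. -/
noncomputable section

namespace HLCS

open scoped BigOperators

/-- Evaluation at `l : ℂ` of a polynomial (in `λ`) with coefficients in `M`,
encoded as a finitely supported family of coefficients. -/
def pev {M : Type} [AddCommGroup M] [Module ℂ M] (l : ℂ) (p : ℕ →₀ M) : M :=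
  p.sum fun n r => l ^ n • r

/-- Evaluation of a polynomial with coefficients in `M` at an operator `T`
(used for substitutions such as `-λ - ∂`). -/
def pevOp {M : Type} [AddCommGroup M] [Module ℂ M] (T : Module.End ℂ M) (p : ℕ →₀ M) : M :=
  p.sum fun n r => (T ^ n) r

/-- The super sign `(-1)^{|a||b|}` attached to parities `i`, `j`. -/
def sg (i j : ZMod 2) : ℂ := (-1 : ℂ) ^ (i * j).val

/-- The data of a `ℤ₂`-graded `ℂ[∂]`-module `R` with an endomorphism `α` and a
`ℂ`-bilinear `λ`-bracket with values in `ℂ[λ] ⊗ R` (encoded by its coefficients). -/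
structure Data (R : Type) [AddCommGroup R] [Module ℂ R] where
  der : Module.End ℂ R
  alpha : Module.End ℂ R
  G : ZMod 2 → Submodule ℂ R
  br : R →ₗ[ℂ] R →ₗ[ℂ] (ℕ →₀ R)

namespace Data

variable {R : Type} [AddCommGroup R] [Module ℂ R] (S : Data R)

/-- `[a_λ b]` evaluated at `λ = l`. -/
def lb (l : ℂ) (a b : R) : R := pev l (S.br a b)

/-- `[a_{-l-∂} b]` : the bracket with `-l - ∂` substituted for `λ`. -/
def lbOp (l : ℂ) (a b : R) : R :=
  pevOp ((-l) • (1 : Module.End ℂ R) - S.der) (S.br a b)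

/-- Multiplicativity: `α [a_λ b] = [α(a)_λ α(b)]`. -/
def Mult : Prop := ∀ (l : ℂ) (a b : R), S.alpha (S.lb l a b) = S.lb l (S.alpha a) (S.alpha b)

end Data

variable {R : Type} [AddCommGroup R] [Module ℂ R]

/-- `(R, α)` with the given data is a Hom-Lie conformal superalgebra.
All polynomial identities in `λ, μ` are stated by evaluating at arbitrary
complex numbers (which is equivalent, `ℂ` being infinite). -/
structure IsHLCS (S : Data R) : Prop where
  internal : DirectSum.IsInternal S.G
  der_even : ∀ i, ∀ a ∈ S.G i, S.der a ∈ S.G i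
  alpha_even : ∀ i, ∀ a ∈ S.G i, S.alpha a ∈ S.G i
  alpha_der : ∀ a, S.alpha (S.der a) = S.der (S.alpha a)
  br_grade : ∀ i j, ∀ a ∈ S.G i, ∀ b ∈ S.G j, ∀ n, S.br a b n ∈ S.G (i + j)
  conf_left : ∀ (l : ℂ) (a b : R), S.lb l (S.der a) b = -l • S.lb l a b
  conf_right : ∀ (l : ℂ) (a b : R), S.lb l a (S.der b) = S.der (S.lb l a b) + l • S.lb l a b
  skew : ∀ i j, ∀ a ∈ S.G i, ∀ b ∈ S.G j, ∀ l : ℂ,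
    S.lb l a b = (-sg i j) • S.lbOp l b a
  jacobi : ∀ i j, ∀ a ∈ S.G i, ∀ b ∈ S.G j, ∀ (c : R) (l m : ℂ),
    S.lb l (S.alpha a) (S.lb m b c) =
      S.lb (l + m) (S.lb l a b) (S.alpha c) + sg i j • S.lb m (S.alpha b) (S.lb l a c)

end HLCS
namespace HLCS

variable {R : Type} [AddCommGroup R] [Module ℂ R]

/-- `(R, α)` with the given data is a Hom-associative conformal superalgebra. -/
structure IsHAssoc (S : Data R) : Prop where
  internal : DirectSum.IsInternal S.G
  der_even : ∀ i, ∀ a ∈ S.G i, S.der a ∈ S.G i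
  alpha_even : ∀ i, ∀ a ∈ S.G i, S.alpha a ∈ S.G i
  alpha_der : ∀ a, S.alpha (S.der a) = S.der (S.alpha a)
  br_grade : ∀ i j, ∀ a ∈ S.G i, ∀ b ∈ S.G j, ∀ n, S.br a b n ∈ S.G (i + j)
  conf_left : ∀ (l : ℂ) (a b : R), S.lb l (S.der a) b = -l • S.lb l a b
  conf_right : ∀ (l : ℂ) (a b : R), S.lb l a (S.der b) = S.der (S.lb l a b) + l • S.lb l a b
  assoc : ∀ (l m : ℂ) (a b c : R),
    S.lb l (S.alpha a) (S.lb m b c) = S.lb (l + m) (S.lb l a b) (S.alpha c)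

section PevLemmas
variable {M : Type} [AddCommGroup M] [Module ℂ M]

/-- `pevOp` as a linear map. -/
def pevOpL (T : Module.End ℂ M) : (ℕ →₀ M) →ₗ[ℂ] M :=
  Finsupp.lsum ℂ fun n => (T ^ n : Module.End ℂ M)

lemma pevOpL_apply (T : Module.End ℂ M) (p : ℕ →₀ M) : pevOpL T p = pevOp T p := rfl

lemma pevOpL_sum (T : Module.End ℂ M) (p : ℕ →₀ M) :
    pevOpL T p = p.sum fun n x => (T ^ n) x := rfl

lemma pev_eq (l : ℂ) (p : ℕ →₀ M) : pev l p = pevOpL (l • (1 : Module.End ℂ M)) p := by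
  simp only [pev, pevOpL_sum]
  refine Finsupp.sum_congr fun n _ => ?_
  simp [smul_pow]

lemma pevOpL_single (T : Module.End ℂ M) (n : ℕ) (x : M) :
    pevOpL T (Finsupp.single n x) = (T ^ n) x := by
  simp [pevOpL]

/-- shift operator: multiplication by `λ`. -/
def Sh : (ℕ →₀ M) →ₗ[ℂ] (ℕ →₀ M) :=
  Finsupp.lsum ℂ fun n => Finsupp.lsingle (n + 1)

lemma Sh_apply (p : ℕ →₀ M) : Sh p = p.sum fun n x => Finsupp.single (n+1) x := rfl

lemma pevOpL_Sh (T : Module.End ℂ M) (p : ℕ →₀ M) :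
    pevOpL T (Sh p) = T (pevOpL T p) := by
  rw [Sh_apply, map_finsuppSum, pevOpL_sum, map_finsuppSum]
  refine Finsupp.sum_congr fun n _ => ?_
  rw [pevOpL_single, pow_succ', Module.End.mul_apply]

lemma pevOpL_Sh_pow (T : Module.End ℂ M) (n : ℕ) (p : ℕ →₀ M) :
    pevOpL T ((Sh ^ n) p) = (T ^ n) (pevOpL T p) := by
  induction n generalizing p with
  | zero => simp
  | succ k ih =>
      rw [pow_succ, Module.End.mul_apply, ih, pevOpL_Sh, pow_succ, Module.End.mul_apply]

/-- apply a linear map to all coefficients. -/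
def mapR (f : Module.End ℂ M) : (ℕ →₀ M) →ₗ[ℂ] (ℕ →₀ M) :=
  Finsupp.lsum ℂ fun n => (Finsupp.lsingle n).comp f

lemma mapR_apply (f : Module.End ℂ M) (p : ℕ →₀ M) :
    mapR f p = p.sum fun n x => Finsupp.single n (f x) := rfl

lemma pevOpL_mapR (T f : Module.End ℂ M) (h : Commute T f) (p : ℕ →₀ M) :
    pevOpL T (mapR f p) = f (pevOpL T p) := by
  rw [mapR_apply, map_finsuppSum, pevOpL_sum, map_finsuppSum]
  refine Finsupp.sum_congr fun n _ => ?_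
  rw [pevOpL_single, ← Module.End.mul_apply, ← Module.End.mul_apply, (h.symm.pow_right n).eq]

/-- substitution `λ ↦ u λ + D` on polynomials. -/
def substAff (u : ℂ) (D : Module.End ℂ M) : (ℕ →₀ M) →ₗ[ℂ] (ℕ →₀ M) :=
  Finsupp.lsum ℂ fun k =>
    ∑ n ∈ Finset.range (k + 1),
      (Finsupp.lsingle n).comp (((k.choose n : ℂ) * u ^ n) • (D ^ (k - n)))

lemma substAff_single (u : ℂ) (D : Module.End ℂ M) (k : ℕ) (x : M) :
    substAff u D (Finsupp.single k x) =
      ∑ n ∈ Finset.range (k + 1),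
        Finsupp.single n (((k.choose n : ℂ) * u ^ n) • (D ^ (k - n)) x) := by
  simp [substAff, Finsupp.lsum_single, LinearMap.sum_apply]

lemma pevOpL_substAff (u : ℂ) (D T : Module.End ℂ M) (h : Commute T D) (p : ℕ →₀ M) :
    pevOpL T (substAff u D p) = pevOpL (u • T + D) p := by
  have h1 : substAff u D p = p.sum fun k x => substAff u D (Finsupp.single k x) := by
    conv_lhs => rw [← p.sum_single]
    exact map_finsuppSum _ _ _
  rw [h1, map_finsuppSum, pevOpL_sum]
  refine Finsupp.sum_congr fun k _ => ?_
  rw [substAff_single, map_sum, ((h.smul_left u).add_pow k), LinearMap.sum_apply]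
  refine Finset.sum_congr rfl fun n _ => ?_
  rw [pevOpL_single]
  simp only [Module.End.mul_apply, Module.End.natCast_apply, smul_pow, LinearMap.smul_apply,
    map_smul, map_nsmul]
  rw [← Nat.cast_smul_eq_nsmul ℂ, smul_smul, mul_smul]


end PevLemmas

section Inj
variable {M : Type} [AddCommGroup M] [Module ℂ M]

lemma pev_zero_of (p : ℕ →₀ M) (h : ∀ l : ℂ, pev l p = 0) : p = 0 := by
  ext m
  show p m = 0
  rw [← Module.forall_dual_apply_eq_zero_iff ℂ]
  intro φ
  classical
  set P : Polynomial ℂ := ∑ n ∈ p.support, Polynomial.C (φ (p n)) * Polynomial.X ^ n with hP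
  have hev : ∀ l : ℂ, P.eval l = φ (pev l p) := by
    intro l
    rw [hP, pev, map_finsuppSum, Finsupp.sum, Polynomial.eval_finset_sum]
    refine Finset.sum_congr rfl fun n _ => ?_
    rw [Polynomial.eval_mul, Polynomial.eval_C, Polynomial.eval_pow, Polynomial.eval_X,
      map_smul, smul_eq_mul, mul_comm]
  have hP0 : P = 0 := Polynomial.funext fun r => by rw [hev r, h r, map_zero, Polynomial.eval_zero]
  by_cases hm : m ∈ p.support
  · have := congrArg (fun q => Polynomial.coeff q m) hP0
    simpa [hP, Polynomial.finset_sum_coeff, Polynomial.coeff_C_mul, Polynomial.coeff_X_pow,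
      Finset.sum_ite_eq' p.support m, hm] using this
  · simp [Finsupp.notMem_support_iff.mp hm]

lemma pev_inj {p q : ℕ →₀ M} (h : ∀ l : ℂ, pev l p = pev l q) : p = q := by
  have : p - q = 0 := pev_zero_of _ fun l => by
    have hadd : pev l (p - q) = pev l p - pev l q := by
      simp [pev, Finsupp.sum_sub_index, sub_smul, smul_sub]
    rw [hadd, h l, sub_self]
  exact sub_eq_zero.mp this


end Inj

section Proj
set_option synthInstance.maxHeartbeats 1000000
variable {R : Type} [AddCommGroup R] [Module ℂ R]
variable (G : ZMod 2 → Submodule ℂ R) [DirectSum.Decomposition G]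

/-- projection onto the `i`-th graded piece. -/
def proj (i : ZMod 2) : R →ₗ[ℂ] R where
  toFun a := (DirectSum.decompose G a i : R)
  map_add' := by
    intro x y
    show ((DirectSum.decompose G (x+y)) i : R) = _
    rw [DirectSum.decompose_add, DirectSum.add_apply, Submodule.coe_add]
  map_smul' := by
    intro c x
    show ((DirectSum.decompose G (c • x)) i : R) = c • ((DirectSum.decompose G x) i : R)
    rw [DirectSum.decompose_smul, DFinsupp.smul_apply, Submodule.coe_smul]

lemma proj_apply (i : ZMod 2) (a : R) : proj G i a = (DirectSum.decompose G a i : R) := rfl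

lemma proj_mem (i : ZMod 2) (a : R) : proj G i a ∈ G i := (DirectSum.decompose G a i).2

lemma proj_of_mem_same {i : ZMod 2} {a : R} (h : a ∈ G i) : proj G i a = a :=
  DirectSum.decompose_of_mem_same G h

lemma proj_of_mem_ne {i j : ZMod 2} {a : R} (h : a ∈ G j) (hij : j ≠ i) : proj G i a = 0 :=
  DirectSum.decompose_of_mem_ne G h hij

lemma proj_sum (a : R) : ∑ i : ZMod 2, proj G i a = a := by
  classical
  conv_rhs => rw [← (DirectSum.decompose G).symm_apply_apply a,
    ← DirectSum.sum_univ_of (DirectSum.decompose G a)]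
  have : ((DirectSum.decompose G).symm : DirectSum (ZMod 2) (fun k => ↥(G k)) → R) = DirectSum.coeAddMonoidHom G := rfl
  rw [this, map_sum]
  simp [proj_apply]

lemma proj_sum_homog {b : ZMod 2 → R} (hb : ∀ i, b i ∈ G i) (j : ZMod 2) :
    proj G j (∑ i : ZMod 2, b i) = b j := by
  classical
  rw [map_sum, Finset.sum_eq_single j]
  · exact proj_of_mem_same G (hb j)
  · intro i _ hij
    exact proj_of_mem_ne G (hb i) hij
  · simp

lemma proj_comm (f : Module.End ℂ R) (hf : ∀ i, ∀ a ∈ G i, f a ∈ G i) (i : ZMod 2) (a : R) :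
    proj G i (f a) = f (proj G i a) := by
  conv_lhs => rw [← proj_sum G a, map_sum]
  exact proj_sum_homog G (fun j => hf j _ (proj_mem G j a)) i


end Proj

section Main

variable {R : Type} [AddCommGroup R] [Module ℂ R] (S : Data R)

/-- affine operators `α + β ∂`. -/
def af (α β : ℂ) : Module.End ℂ R := α • 1 + β • S.der

lemma af_comm (α β γ δ : ℂ) : Commute (af S α β) (af S γ δ) := by
  unfold af
  exact Commute.add_left
    (Commute.add_right (((Commute.refl 1).smul_left α).smul_right γ)
      (((Commute.one_left S.der).smul_left α).smul_right δ))
    (Commute.add_right (((Commute.one_right S.der).smul_left β).smul_right γ)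
      (((Commute.refl S.der).smul_left β).smul_right δ))

lemma af_comm_der (α β : ℂ) : Commute (af S α β) S.der := by
  have := af_comm S α β 0 1
  simpa [af] using this

lemma af_apply (α β : ℂ) (x : R) : af S α β x = α • x + β • S.der x := by
  simp [af]

lemma af_smul_one (z : ℂ) : z • (1 : Module.End ℂ R) = af S z 0 := by simp [af]

lemma af_T (z : ℂ) : (-z) • (1 : Module.End ℂ R) - S.der = af S (-z) (-1) := by
  simp [af, neg_one_smul, sub_eq_add_neg]

lemma lb_eq (z : ℂ) (a b : R) : S.lb z a b = pevOpL (af S z 0) (S.br a b) := by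
  rw [Data.lb, pev_eq, af_smul_one S]

lemma lbOp_eq (z : ℂ) (a b : R) : S.lbOp z a b = pevOpL (af S (-z) (-1)) (S.br a b) := by
  rw [Data.lbOp, ← pevOpL_apply, af_T S]

section core
variable (hcl : ∀ (l : ℂ) (a b : R), S.lb l (S.der a) b = -l • S.lb l a b)
variable (hcr : ∀ (l : ℂ) (a b : R), S.lb l a (S.der b) = S.der (S.lb l a b) + l • S.lb l a b)

include hcl in
lemma CL (a b : R) : S.br (S.der a) b = -(Sh (S.br a b)) := by
  apply pev_inj
  intro z
  have h1 : pev z (S.br (S.der a) b) = -z • S.lb z a b := hcl z a b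
  rw [h1, pev_eq, map_neg, pevOpL_Sh]
  simp only [LinearMap.smul_apply, Module.End.one_apply]
  rw [← pev_eq, Data.lb, neg_smul]

include hcr in
lemma CR (a b : R) : S.br a (S.der b) = mapR S.der (S.br a b) + Sh (S.br a b) := by
  apply pev_inj
  intro z
  have h1 : pev z (S.br a (S.der b)) = S.der (S.lb z a b) + z • S.lb z a b := hcr z a b
  rw [h1, pev_eq, map_add, pevOpL_Sh, pevOpL_mapR _ _ ((Commute.one_left S.der).smul_left z)]
  simp only [LinearMap.smul_apply, Module.End.one_apply]
  rw [← pev_eq, Data.lb]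

include hcl in
lemma PL (W : Module.End ℂ R) (a b : R) :
    pevOpL W (S.br (S.der a) b) = -(W (pevOpL W (S.br a b))) := by
  rw [CL S hcl, map_neg, pevOpL_Sh]

include hcr in
lemma PR (W : Module.End ℂ R) (hW : Commute W S.der) (a b : R) :
    pevOpL W (S.br a (S.der b)) = S.der (pevOpL W (S.br a b)) + W (pevOpL W (S.br a b)) := by
  rw [CR S hcr, map_add, pevOpL_Sh, pevOpL_mapR _ _ hW]

include hcr in
lemma convR_single (Λ : Module.End ℂ R) (hΛ : Commute Λ S.der) (μ₀ μ₁ : ℂ)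
    (j : ℕ) (a x : R) :
    pevOpL Λ (S.br a (((af S μ₀ μ₁) ^ j) x)) =
      ((μ₀ • 1 + μ₁ • (S.der + Λ)) ^ j) (pevOpL Λ (S.br a x)) := by
  induction j generalizing x with
  | zero => simp
  | succ k ih =>
      rw [pow_succ (af S μ₀ μ₁) k, Module.End.mul_apply, ih,
        pow_succ (μ₀ • 1 + μ₁ • (S.der + Λ)) k, Module.End.mul_apply]
      congr 1
      rw [af_apply S, map_add, map_add, map_smul, map_smul, map_smul, map_smul,
        PR S hcr Λ hΛ]
      simp only [LinearMap.add_apply, LinearMap.smul_apply, Module.End.one_apply]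

include hcl in
lemma convL_single (W : Module.End ℂ R) (μ₀ μ₁ : ℂ) (n : ℕ) (x c : R) :
    pevOpL W (S.br (((af S μ₀ μ₁) ^ n) x) c) =
      ((μ₀ • 1 - μ₁ • W) ^ n) (pevOpL W (S.br x c)) := by
  induction n generalizing x with
  | zero => simp
  | succ k ih =>
      rw [pow_succ (af S μ₀ μ₁) k, Module.End.mul_apply, ih,
        pow_succ (μ₀ • 1 - μ₁ • W) k, Module.End.mul_apply]
      congr 1
      rw [af_apply S, map_add, LinearMap.add_apply, map_add, map_smul, LinearMap.smul_apply,
        map_smul, map_smul, LinearMap.smul_apply, map_smul, PL S hcl W]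
      simp only [LinearMap.sub_apply, LinearMap.smul_apply, Module.End.one_apply]
      rw [smul_neg, ← sub_eq_add_neg]

include hcr in
lemma convR (Λ : Module.End ℂ R) (hΛ : Commute Λ S.der) (μ₀ μ₁ : ℂ) (a : R) (q : ℕ →₀ R) :
    pevOpL Λ (S.br a (pevOpL (af S μ₀ μ₁) q)) =
      q.sum fun j x => ((μ₀ • 1 + μ₁ • (S.der + Λ)) ^ j) (pevOpL Λ (S.br a x)) := by
  conv_lhs => rw [pevOpL_sum (af S μ₀ μ₁)]
  rw [map_finsuppSum, map_finsuppSum]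
  exact Finsupp.sum_congr fun j _ => convR_single S hcr Λ hΛ μ₀ μ₁ j a _

include hcl in
lemma convL (W : Module.End ℂ R) (μ₀ μ₁ : ℂ) (c : R) (p : ℕ →₀ R) :
    pevOpL W (S.br (pevOpL (af S μ₀ μ₁) p) c) =
      p.sum fun n x => ((μ₀ • 1 - μ₁ • W) ^ n) (pevOpL W (S.br x c)) := by
  have h0 : S.br (pevOpL (af S μ₀ μ₁) p) c = S.br.flip c (pevOpL (af S μ₀ μ₁) p) := rfl
  rw [h0]
  conv_lhs => rw [pevOpL_sum (af S μ₀ μ₁)]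
  rw [map_finsuppSum, map_finsuppSum]
  exact Finsupp.sum_congr fun n _ => convL_single S hcl W μ₀ μ₁ n _ c


lemma smul_one_pow_apply (u : ℂ) (j : ℕ) (y : R) :
    ((u • (1 : Module.End ℂ R))^j) y = u^j • y := by
  rw [smul_pow, one_pow, LinearMap.smul_apply, Module.End.one_apply]

variable (hassoc : ∀ (l m : ℂ) (a b c : R),
    S.lb l (S.alpha a) (S.lb m b c) = S.lb (l+m) (S.lb l a b) (S.alpha c))

include hassoc in
lemma mlB (u : ℂ) (V : Module.End ℂ R) (a b c : R) :
    ((S.br b c).sum fun j x => ((u • (1 : Module.End ℂ R))^j) (pevOpL V (S.br (S.alpha a) x)))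
    = (S.br a b).sum fun n x => (V^n) (pevOpL (u • (1 : Module.End ℂ R) + V) (S.br x (S.alpha c))) := by
  set F : ℕ →₀ R := S.br (S.alpha a) (pev u (S.br b c)) with hF
  set H : ℕ →₀ R := (S.br a b).sum fun n x =>
    (Sh^n) (substAff 1 (u • (1 : Module.End ℂ R)) (S.br x (S.alpha c))) with hH
  have hFsum : ∀ (W : Module.End ℂ R),
      pevOpL W F = (S.br b c).sum fun j x => u^j • pevOpL W (S.br (S.alpha a) x) := by
    intro W
    rw [hF, pev]
    rw [map_finsuppSum (S.br (S.alpha a)), map_finsuppSum]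
    exact Finsupp.sum_congr fun j _ => by rw [map_smul, map_smul]
  have hHsum : ∀ (W : Module.End ℂ R), Commute W (u • (1 : Module.End ℂ R)) →
      pevOpL W H = (S.br a b).sum fun n x =>
        (W^n) (pevOpL (u • (1 : Module.End ℂ R) + W) (S.br x (S.alpha c))) := by
    intro W hW
    rw [hH, map_finsuppSum]
    refine Finsupp.sum_congr fun n _ => ?_
    rw [pevOpL_Sh_pow, pevOpL_substAff 1 (u • (1 : Module.End ℂ R)) W hW, one_smul,
      add_comm W (u • (1 : Module.End ℂ R))]
  have hFH : F = H := by
    apply pev_inj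
    intro v
    have hcomm : Commute (v • (1 : Module.End ℂ R)) (u • 1) :=
      ((Commute.refl (1 : Module.End ℂ R)).smul_left v).smul_right u
    rw [pev_eq, pev_eq, hHsum (v • 1) hcomm]
    have h3 : u • (1 : Module.End ℂ R) + v • 1 = (v + u) • 1 := by
      rw [← add_smul, add_comm]
    rw [h3, ← pev_eq]
    have h1 : pev v F = S.lb v (S.alpha a) (S.lb u b c) := rfl
    rw [h1, hassoc v u a b c]
    rw [Data.lb, pev_eq, Data.lb, pev_eq]
    have h0 : S.br (pevOpL (v • (1 : Module.End ℂ R)) (S.br a b)) (S.alpha c)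
        = S.br.flip (S.alpha c) (pevOpL (v • (1 : Module.End ℂ R)) (S.br a b)) := rfl
    rw [h0]
    conv_lhs => rw [pevOpL_sum (v • (1 : Module.End ℂ R))]
    rw [map_finsuppSum, map_finsuppSum]
    refine Finsupp.sum_congr fun n _ => ?_
    simp only [LinearMap.flip_apply, smul_one_pow_apply, map_smul]
  calc ((S.br b c).sum fun j x => ((u • (1 : Module.End ℂ R))^j) (pevOpL V (S.br (S.alpha a) x)))
      = pevOpL V F := by
        rw [hFsum V]
        exact Finsupp.sum_congr fun j _ => by rw [smul_one_pow_apply]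
    _ = pevOpL V H := by rw [hFH]
    _ = _ := hHsum V ((Commute.one_right V).smul_right u)

include hassoc in
lemma ML (U V : Module.End ℂ R) (hUV : Commute U V) (a b c : R) :
    ((S.br b c).sum fun j x => (U^j) (pevOpL V (S.br (S.alpha a) x)))
    = (S.br a b).sum fun n x => (V^n) (pevOpL (U + V) (S.br x (S.alpha c))) := by
  set F : ℕ →₀ R := (S.br b c).sum fun j x =>
    Finsupp.single j (pevOpL V (S.br (S.alpha a) x)) with hF
  set H : ℕ →₀ R := (S.br a b).sum fun n x =>
    mapR (V^n) (substAff 1 V (S.br x (S.alpha c))) with hH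
  have hFsum : ∀ (W : Module.End ℂ R),
      pevOpL W F = (S.br b c).sum fun j x => (W^j) (pevOpL V (S.br (S.alpha a) x)) := by
    intro W
    rw [hF, map_finsuppSum]
    exact Finsupp.sum_congr fun j _ => by rw [pevOpL_single]
  have hHsum : ∀ (W : Module.End ℂ R), Commute W V →
      pevOpL W H = (S.br a b).sum fun n x =>
        (V^n) (pevOpL (W + V) (S.br x (S.alpha c))) := by
    intro W hW
    rw [hH, map_finsuppSum]
    refine Finsupp.sum_congr fun n _ => ?_
    rw [pevOpL_mapR _ _ (hW.pow_right n), pevOpL_substAff 1 _ _ hW, one_smul]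
  have hFH : F = H := by
    apply pev_inj
    intro v
    rw [pev_eq, pev_eq, hFsum, hHsum (v • 1) ((Commute.one_left V).smul_left v)]
    exact mlB S hassoc v V a b c
  rw [← hFsum U, hFH, hHsum U hUV]


omit hcl hcr hassoc in
lemma af_W (μ₀ μ₁ v w : ℂ) :
    μ₀ • (1 : Module.End ℂ R) + μ₁ • (S.der + af S v w) = af S (μ₀ + μ₁*v) (μ₁*(1+w)) := by
  simp only [af]
  module

omit hcl hcr hassoc in
lemma af_V (μ₀ μ₁ v w : ℂ) :
    μ₀ • (1 : Module.End ℂ R) - μ₁ • (af S v w) = af S (μ₀ - μ₁*v) (-(μ₁*w)) := by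
  simp only [af]
  module

omit hcl hcr hassoc in
lemma af_add' (a b c d : ℂ) : af S a b + af S c d = af S (a+c) (b+d) := by
  simp only [af]
  module

include hcl hcr hassoc in
lemma i2 (l m : ℂ) (a b c : R) :
    S.lb l (S.alpha a) (S.lbOp m c b) = S.lbOp m (S.lb l a c) (S.alpha b) := by
  rw [lb_eq S l (S.alpha a), lbOp_eq S m c b,
    convR S hcr (af S l 0) (af_comm_der S l 0) (-m) (-1)]
  simp only [af_W S (-m) (-1) l 0]
  have e1 : (-m + -1 * l : ℂ) = -(l+m) := by ring
  have e2 : ((-1 : ℂ) * (1 + 0)) = -1 := by ring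
  rw [e1, e2, ML S hassoc (af S (-(l+m)) (-1)) (af S l 0) (af_comm S _ _ _ _) a c b]
  simp only [af_add' S]
  have e3 : (-(l+m) + l : ℂ) = -m := by ring
  have e4 : ((-1 : ℂ) + 0) = -1 := by ring
  rw [e3, e4, lbOp_eq S m _ (S.alpha b), lb_eq S l a c,
    convL S hcl (af S (-m) (-1)) l 0]
  simp only [af_V S l 0 (-m) (-1)]
  have e5 : (l - 0 * -m : ℂ) = l := by ring
  have e6 : (-(0 * -1) : ℂ) = 0 := by ring
  rw [e5, e6]


include hcl hcr hassoc in
lemma i3 (l m : ℂ) (a b c : R) :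
    S.lbOp l (S.lb m b c) (S.alpha a) = S.lb m (S.alpha b) (S.lbOp l c a) := by
  rw [lb_eq S m (S.alpha b), lbOp_eq S l c a,
    convR S hcr (af S m 0) (af_comm_der S m 0) (-l) (-1)]
  simp only [af_W S (-l) (-1) m 0]
  have e1 : (-l + -1 * m : ℂ) = -(l+m) := by ring
  have e2 : ((-1 : ℂ) * (1 + 0)) = -1 := by ring
  rw [e1, e2, ML S hassoc (af S (-(l+m)) (-1)) (af S m 0) (af_comm S _ _ _ _) b c a]
  simp only [af_add' S]
  have e3 : (-(l+m) + m : ℂ) = -l := by ring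
  have e4 : ((-1:ℂ) + 0) = -1 := by ring
  rw [e3, e4, lbOp_eq S l _ (S.alpha a), lb_eq S m b c, convL S hcl (af S (-l) (-1)) m 0]
  simp only [af_V S m 0 (-l) (-1)]
  have e5 : (m - 0 * -l : ℂ) = m := by ring
  have e6 : (-(0 * -1) : ℂ) = 0 := by ring
  rw [e5, e6]

include hcl hcr hassoc in
lemma i4 (l m : ℂ) (a b c : R) :
    S.lbOp l (S.lbOp m c b) (S.alpha a) = S.lbOp (l+m) (S.alpha c) (S.lbOp l b a) := by
  rw [lbOp_eq S (l+m) (S.alpha c), lbOp_eq S l b a,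
    convR S hcr (af S (-(l+m)) (-1)) (af_comm_der S _ _) (-l) (-1)]
  simp only [af_W S (-l) (-1) (-(l+m)) (-1)]
  have e1 : (-l + -1 * -(l+m) : ℂ) = m := by ring
  have e2 : ((-1:ℂ) * (1 + -1)) = 0 := by ring
  rw [e1, e2, ML S hassoc (af S m 0) (af S (-(l+m)) (-1)) (af_comm S _ _ _ _) c b a]
  simp only [af_add' S]
  have e3 : (m + -(l+m) : ℂ) = -l := by ring
  have e4 : ((0:ℂ) + -1) = -1 := by ring
  rw [e3, e4, lbOp_eq S l _ (S.alpha a), lbOp_eq S m c b,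
    convL S hcl (af S (-l) (-1)) (-m) (-1)]
  simp only [af_V S (-m) (-1) (-l) (-1)]
  have e5 : (-m - -1 * -l : ℂ) = -(l+m) := by ring
  have e6 : (-((-1 : ℂ) * -1) : ℂ) = -1 := by ring
  rw [e5, e6]

include hcl hcr hassoc in
lemma i5 (l m : ℂ) (a b c : R) :
    S.lb (l+m) (S.lbOp l b a) (S.alpha c) = S.lb m (S.alpha b) (S.lb l a c) := by
  rw [lb_eq S m (S.alpha b), lb_eq S l a c, convR S hcr (af S m 0) (af_comm_der S m 0) l 0]
  simp only [af_W S l 0 m 0]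
  have e1 : (l + 0 * m : ℂ) = l := by ring
  have e2 : ((0:ℂ) * (1 + 0)) = 0 := by ring
  rw [e1, e2, ML S hassoc (af S l 0) (af S m 0) (af_comm S _ _ _ _) b a c]
  simp only [af_add' S]
  have e4 : ((0:ℂ) + 0) = 0 := by ring
  rw [e4, lb_eq S (l+m) _ (S.alpha c), lbOp_eq S l b a,
    convL S hcl (af S (l+m) 0) (-l) (-1)]
  simp only [af_V S (-l) (-1) (l+m) 0]
  have e5 : (-l - -1 * (l+m) : ℂ) = m := by ring
  have e6 : (-((-1 : ℂ) * 0) : ℂ) = 0 := by ring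
  rw [e5, e6]

include hcl hcr hassoc in
lemma i6 (l m : ℂ) (a b c : R) :
    S.lbOp (l+m) (S.alpha c) (S.lb l a b) = S.lbOp m (S.lbOp l c a) (S.alpha b) := by
  rw [lbOp_eq S (l+m) (S.alpha c), lb_eq S l a b,
    convR S hcr (af S (-(l+m)) (-1)) (af_comm_der S _ _) l 0]
  simp only [af_W S l 0 (-(l+m)) (-1)]
  have e1 : (l + 0 * -(l+m) : ℂ) = l := by ring
  have e2 : ((0:ℂ) * (1 + -1)) = 0 := by ring
  rw [e1, e2, ML S hassoc (af S l 0) (af S (-(l+m)) (-1)) (af_comm S _ _ _ _) c a b]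
  simp only [af_add' S]
  have e3 : (l + -(l+m) : ℂ) = -m := by ring
  have e4 : ((0:ℂ) + -1) = -1 := by ring
  rw [e3, e4, lbOp_eq S m _ (S.alpha b), lbOp_eq S l c a,
    convL S hcl (af S (-m) (-1)) (-l) (-1)]
  simp only [af_V S (-l) (-1) (-m) (-1)]
  have e5 : (-l - -1 * -m : ℂ) = -(l+m) := by ring
  have e6 : (-((-1 : ℂ) * -1) : ℂ) = -1 := by ring
  rw [e5, e6]

end core

-- ============ construction ============


section constr
variable {R : Type} [AddCommGroup R] [Module ℂ R] (S : Data R)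

-- generic linearity lemmas for lb
lemma lb_add2 (z : ℂ) (x y y' : R) : S.lb z x (y + y') = S.lb z x y + S.lb z x y' := by
  simp [Data.lb, pev_eq, map_add]
lemma lb_sub2 (z : ℂ) (x y y' : R) : S.lb z x (y - y') = S.lb z x y - S.lb z x y' := by
  simp [Data.lb, pev_eq, map_sub]
lemma lb_smul2 (z : ℂ) (c : ℂ) (x y : R) : S.lb z x (c • y) = c • S.lb z x y := by
  simp [Data.lb, pev_eq, map_smul]
lemma lb_sub1 (z : ℂ) (x x' y : R) : S.lb z (x - x') y = S.lb z x y - S.lb z x' y := by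
  simp [Data.lb, pev_eq, map_sub, LinearMap.sub_apply]
lemma lb_smul1 (z : ℂ) (c : ℂ) (x y : R) : S.lb z (c • x) y = c • S.lb z x y := by
  simp [Data.lb, pev_eq, map_smul, LinearMap.smul_apply]

-- membership lemmas
lemma pow_stab (W : Submodule ℂ R) (D : Module.End ℂ R) (hD : ∀ x ∈ W, D x ∈ W) (n : ℕ) :
    ∀ x ∈ W, (D ^ n) x ∈ W := by
  induction n with
  | zero => intro x hx; simpa using hx
  | succ k ih =>
      intro x hx
      rw [pow_succ, Module.End.mul_apply]
      exact ih _ (hD _ hx)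

lemma af_stab (W : Submodule ℂ R) (hD : ∀ x ∈ W, S.der x ∈ W) (α β : ℂ) :
    ∀ x ∈ W, af S α β x ∈ W := by
  intro x hx
  rw [af_apply]
  exact W.add_mem (W.smul_mem _ hx) (W.smul_mem _ (hD _ hx))

lemma pevOpL_mem (W : Submodule ℂ R) (T : Module.End ℂ R) (hT : ∀ x ∈ W, T x ∈ W)
    (p : ℕ →₀ R) (hp : ∀ n, p n ∈ W) : pevOpL T p ∈ W := by
  rw [pevOpL_sum]
  exact Submodule.finsuppSum_mem ℂ W p _ fun n _ => pow_stab W T hT n _ (hp n)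

variable (hder : ∀ i, ∀ a ∈ S.G i, S.der a ∈ S.G i)
variable (hbr : ∀ i j, ∀ a ∈ S.G i, ∀ b ∈ S.G j, ∀ n, S.br a b n ∈ S.G (i + j))

include hder hbr in
lemma lb_mem {i j : ZMod 2} {a b : R} (ha : a ∈ S.G i) (hb : b ∈ S.G j) (z : ℂ) :
    S.lb z a b ∈ S.G (i + j) := by
  rw [lb_eq]
  exact pevOpL_mem _ _ (af_stab S _ (hder _) z 0) _ (hbr i j a ha b hb)

include hder hbr in
lemma lbOp_mem {i j : ZMod 2} {a b : R} (ha : a ∈ S.G i) (hb : b ∈ S.G j) (z : ℂ) :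
    S.lbOp z a b ∈ S.G (i + j) := by
  rw [lbOp_eq]
  exact pevOpL_mem _ _ (af_stab S _ (hder _) (-z) (-1)) _ (hbr i j a ha b hb)

/-- substitution `λ ↦ -λ - ∂`. -/
def subm : (ℕ →₀ R) →ₗ[ℂ] (ℕ →₀ R) := substAff (-1) (-S.der)

lemma subm_pev (z : ℂ) (p : ℕ →₀ R) :
    pevOpL (af S z 0) (subm S p) = pevOpL (af S (-z) (-1)) p := by
  rw [subm, pevOpL_substAff _ _ _ ((af_comm_der S z 0).neg_right)]
  have hop : (-1 : ℂ) • (af S z 0) + -S.der = af S (-z) (-1) := by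
    simp only [af]; module
  rw [hop]

lemma subm_pevOp (z : ℂ) (p : ℕ →₀ R) :
    pevOpL (af S (-z) (-1)) (subm S p) = pevOpL (af S z 0) p := by
  rw [subm, pevOpL_substAff _ _ _ ((af_comm_der S (-z) (-1)).neg_right)]
  have hop : (-1 : ℂ) • (af S (-z) (-1)) + -S.der = af S z 0 := by
    simp only [af]; module
  rw [hop]

include hder in
lemma subm_coeff_mem (W : ZMod 2) (p : ℕ →₀ R) (hp : ∀ n, p n ∈ S.G W) (n : ℕ) :
    (subm S p) n ∈ S.G W := by
  classical
  rw [subm, substAff]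
  rw [Finsupp.lsum_apply]
  rw [Finsupp.sum_apply]
  refine Submodule.finsuppSum_mem ℂ _ _ _ fun k _ => ?_
  simp only [LinearMap.sum_apply, LinearMap.comp_apply, Finsupp.lsingle_apply,
    LinearMap.smul_apply]
  rw [Finset.sum_apply']
  refine Submodule.sum_mem _ fun n' _ => ?_
  rw [Finsupp.single_apply]
  split
  · refine Submodule.smul_mem _ _ ?_
    refine pow_stab _ (-S.der) (fun x hx => ?_) _ _ (hp k)
    simpa using Submodule.neg_mem _ (hder W x hx)
  · exact Submodule.zero_mem _

variable [DirectSum.Decomposition S.G]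

def newBr : R →ₗ[ℂ] R →ₗ[ℂ] (ℕ →₀ R) :=
  S.br - ∑ i : ZMod 2, ∑ j : ZMod 2, sg i j •
    ((LinearMap.llcomp ℂ R (ℕ →₀ R) (ℕ →₀ R) (subm S)).comp
      (((S.br.comp (proj S.G j)).flip).comp (proj S.G i)))

lemma newBr_apply (a b : R) :
    newBr S a b = S.br a b - ∑ i : ZMod 2, ∑ j : ZMod 2,
      sg i j • subm S (S.br (proj S.G j b) (proj S.G i a)) := by
  simp only [newBr, LinearMap.sub_apply, LinearMap.coe_sum, Finset.sum_apply,
    LinearMap.smul_apply, LinearMap.comp_apply, LinearMap.flip_apply,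
    LinearMap.llcomp_apply]

lemma newBr_homog {i j : ZMod 2} {a b : R} (ha : a ∈ S.G i) (hb : b ∈ S.G j) :
    newBr S a b = S.br a b - sg i j • subm S (S.br b a) := by
  classical
  rw [newBr_apply]
  congr 1
  rw [Finset.sum_eq_single i]
  · rw [Finset.sum_eq_single j]
    · rw [proj_of_mem_same S.G ha, proj_of_mem_same S.G hb]
    · intro j' _ hj'
      rw [proj_of_mem_ne S.G hb (fun h => hj' h.symm)]
      simp
    · simp
  · intro i' _ hi'
    rw [proj_of_mem_ne S.G ha (fun h => hi' h.symm)]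
    simp
  · simp

def newData : Data R := ⟨S.der, S.alpha, S.G, newBr S⟩

lemma af_new (α β : ℂ) : af (newData S) α β = af S α β := rfl

lemma new_lb_eq (z : ℂ) (a b : R) :
    (newData S).lb z a b = pevOpL (af S z 0) (newBr S a b) := lb_eq (newData S) z a b

lemma new_lbOp_eq (z : ℂ) (a b : R) :
    (newData S).lbOp z a b = pevOpL (af S (-z) (-1)) (newBr S a b) := lbOp_eq (newData S) z a b

lemma new_lb_homog {i j : ZMod 2} {a b : R} (ha : a ∈ S.G i) (hb : b ∈ S.G j) (z : ℂ) :
    (newData S).lb z a b = S.lb z a b - sg i j • S.lbOp z b a := by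
  rw [new_lb_eq, newBr_homog S ha hb, map_sub, map_smul, subm_pev, ← lb_eq, ← lbOp_eq]

lemma new_lbOp_homog {i j : ZMod 2} {a b : R} (ha : a ∈ S.G i) (hb : b ∈ S.G j) (z : ℂ) :
    (newData S).lbOp z a b = S.lbOp z a b - sg i j • S.lb z b a := by
  rw [new_lbOp_eq, newBr_homog S ha hb, map_sub, map_smul, subm_pevOp, ← lb_eq, ← lbOp_eq]

end constr

section constr2
variable {R : Type} [AddCommGroup R] [Module ℂ R] (S : Data R)
variable (hcl : ∀ (l : ℂ) (a b : R), S.lb l (S.der a) b = -l • S.lb l a b)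
variable (hcr : ∀ (l : ℂ) (a b : R), S.lb l a (S.der b) = S.der (S.lb l a b) + l • S.lb l a b)
variable (hder : ∀ i, ∀ a ∈ S.G i, S.der a ∈ S.G i)
variable (hbr : ∀ i j, ∀ a ∈ S.G i, ∀ b ∈ S.G j, ∀ n, S.br a b n ∈ S.G (i + j))
variable [DirectSum.Decomposition S.G]

include hcl hcr hder in
lemma new_cl (z : ℂ) (a b : R) :
    (newData S).lb z (S.der a) b = -z • (newData S).lb z a b := by
  rw [new_lb_eq, new_lb_eq, newBr_apply, newBr_apply, map_sub, map_sub, smul_sub]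
  congr 1
  · rw [PL S hcl (af S z 0) a b]
    simp [af_apply, neg_smul]
  · rw [map_sum, map_sum, Finset.smul_sum]
    refine Finset.sum_congr rfl fun i' _ => ?_
    rw [map_sum, map_sum, Finset.smul_sum]
    refine Finset.sum_congr rfl fun j' _ => ?_
    rw [map_smul, map_smul, proj_comm S.G S.der hder, subm_pev, subm_pev,
      PR S hcr (af S (-z) (-1)) (af_comm_der S (-z) (-1))]
    rw [af_apply]
    module

include hcl hcr hder in
lemma new_cr (z : ℂ) (a b : R) :
    (newData S).lb z a (S.der b) =
      S.der ((newData S).lb z a b) + z • (newData S).lb z a b := by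
  rw [new_lb_eq, new_lb_eq, newBr_apply, newBr_apply, map_sub, map_sub, map_sub, smul_sub,
    sub_add_sub_comm]
  congr 1
  · rw [PR S hcr (af S z 0) (af_comm_der S z 0) a b]
    simp [af_apply]
  · rw [map_sum, map_sum, map_sum, Finset.smul_sum, ← Finset.sum_add_distrib]
    refine Finset.sum_congr rfl fun i' _ => ?_
    rw [map_sum, map_sum, map_sum, Finset.smul_sum, ← Finset.sum_add_distrib]
    refine Finset.sum_congr rfl fun j' _ => ?_
    rw [map_smul, map_smul, map_smul, proj_comm S.G S.der hder, subm_pev, subm_pev,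
      PL S hcl (af S (-z) (-1))]
    rw [af_apply]
    module

include hder hbr in
lemma new_br_grade : ∀ i j, ∀ a ∈ S.G i, ∀ b ∈ S.G j, ∀ n, newBr S a b n ∈ S.G (i+j) := by
  intro i j a ha b hb n
  rw [newBr_homog S ha hb, Finsupp.sub_apply, Finsupp.smul_apply]
  refine Submodule.sub_mem _ (hbr i j a ha b hb n) (Submodule.smul_mem _ _ ?_)
  refine subm_coeff_mem S hder (i+j) _ (fun n' => ?_) n
  have := hbr j i b hb a ha n'
  rwa [add_comm j i] at this

lemma sg_sq (i j : ZMod 2) : sg i j * sg i j = 1 := by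
  rw [sg, ← mul_pow]
  norm_num

lemma sg_comm2 (i j : ZMod 2) : sg j i = sg i j := by
  rw [sg, sg, mul_comm]


lemma new_skew (i j : ZMod 2) (a : R) (ha : a ∈ S.G i) (b : R) (hb : b ∈ S.G j) (l : ℂ) :
    (newData S).lb l a b = (-sg i j) • (newData S).lbOp l b a := by
  rw [new_lb_homog S ha hb, new_lbOp_homog S hb ha, sg_comm2 i j]
  have h1 : (-sg i j) • (S.lbOp l b a - sg i j • S.lb l a b)
      = (sg i j * sg i j) • S.lb l a b - sg i j • S.lbOp l b a := by
    module
  rw [h1, sg_sq, one_smul]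

lemma zmod2_cases (z : ZMod 2) : z = 0 ∨ z = 1 := by revert z; decide

lemma zmod2_sum {M : Type} [AddCommMonoid M] (f : ZMod 2 → M) :
    ∑ i : ZMod 2, f i = f 0 + f 1 := by
  have h : (Finset.univ : Finset (ZMod 2)) = {0, 1} := by decide
  rw [h, Finset.sum_insert (by decide), Finset.sum_singleton]

lemma sg_00 : sg (0 : ZMod 2) 0 = 1 := by simp [sg]
lemma sg_01 : sg (0 : ZMod 2) 1 = 1 := by simp [sg]
lemma sg_10 : sg (1 : ZMod 2) 0 = 1 := by simp [sg]
lemma sg_11 : sg (1 : ZMod 2) 1 = -1 := by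
  rw [sg]
  norm_num [show ((1 : ZMod 2) * 1).val = 1 from rfl, show ((1 : ZMod 2)).val = 1 from rfl]

end constr2

section jac
variable {R : Type} [AddCommGroup R] [Module ℂ R] (S : Data R)
variable (hcl : ∀ (l : ℂ) (a b : R), S.lb l (S.der a) b = -l • S.lb l a b)
variable (hcr : ∀ (l : ℂ) (a b : R), S.lb l a (S.der b) = S.der (S.lb l a b) + l • S.lb l a b)
variable (hassoc : ∀ (l m : ℂ) (a b c : R),
    S.lb l (S.alpha a) (S.lb m b c) = S.lb (l+m) (S.lb l a b) (S.alpha c))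
variable (hder : ∀ i, ∀ a ∈ S.G i, S.der a ∈ S.G i)
variable (halpha : ∀ i, ∀ a ∈ S.G i, S.alpha a ∈ S.G i)
variable (hbr : ∀ i j, ∀ a ∈ S.G i, ∀ b ∈ S.G j, ∀ n, S.br a b n ∈ S.G (i + j))
variable [DirectSum.Decomposition S.G]

include hcl hcr hassoc hder halpha hbr in
lemma new_jacobi_homog (i j k : ZMod 2) (a : R) (ha : a ∈ S.G i) (b : R) (hb : b ∈ S.G j)
    (c : R) (hc : c ∈ S.G k) (l m : ℂ) :
    (newData S).lb l (S.alpha a) ((newData S).lb m b c) =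
      (newData S).lb (l+m) ((newData S).lb l a b) (S.alpha c)
      + sg i j • (newData S).lb m (S.alpha b) ((newData S).lb l a c) := by
  have hαa : S.alpha a ∈ S.G i := halpha i a ha
  have hαb : S.alpha b ∈ S.G j := halpha j b hb
  have hαc : S.alpha c ∈ S.G k := halpha k c hc
  have hX1 : S.lb m b c ∈ S.G (j+k) := lb_mem S hder hbr hb hc m
  have hX2 : S.lbOp m c b ∈ S.G (j+k) := by
    have := lbOp_mem S hder hbr hc hb m; rwa [add_comm k j] at this
  have hY1 : S.lb l a b ∈ S.G (i+j) := lb_mem S hder hbr ha hb l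
  have hY2 : S.lbOp l b a ∈ S.G (i+j) := by
    have := lbOp_mem S hder hbr hb ha l; rwa [add_comm j i] at this
  have hZ1 : S.lb l a c ∈ S.G (i+k) := lb_mem S hder hbr ha hc l
  have hZ2 : S.lbOp l c a ∈ S.G (i+k) := by
    have := lbOp_mem S hder hbr hc ha l; rwa [add_comm k i] at this
  rw [new_lb_homog S hb hc m, new_lb_homog S ha hb l, new_lb_homog S ha hc l]
  rw [lb_sub2 (newData S), lb_smul2 (newData S), lb_sub1 (newData S), lb_smul1 (newData S),
      lb_sub2 (newData S), lb_smul2 (newData S)]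
  rw [new_lb_homog S hαa hX1 l, new_lb_homog S hαa hX2 l, new_lb_homog S hY1 hαc (l+m),
      new_lb_homog S hY2 hαc (l+m), new_lb_homog S hαb hZ1 m, new_lb_homog S hαb hZ2 m]
  rw [hassoc l m a b c, i2 S hcl hcr hassoc l m a b c, i3 S hcl hcr hassoc l m a b c,
      i4 S hcl hcr hassoc l m a b c, i5 S hcl hcr hassoc l m a b c,
      i6 S hcl hcr hassoc l m a b c]
  have h00 : (0+0 : ZMod 2) = 0 := by decide
  have h01 : (0+1 : ZMod 2) = 1 := by decide
  have h10 : (1+0 : ZMod 2) = 1 := by decide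
  have h11 : (1+1 : ZMod 2) = 0 := by decide
  rcases zmod2_cases i with hi | hi <;> rcases zmod2_cases j with hj | hj <;>
    rcases zmod2_cases k with hk | hk <;> subst hi <;> subst hj <;> subst hk <;>
    simp only [h00, h01, h10, h11, sg_00, sg_01, sg_10, sg_11] <;>
    module

include hcl hcr hassoc hder halpha hbr in
lemma new_jacobi (i j : ZMod 2) (a : R) (ha : a ∈ S.G i) (b : R) (hb : b ∈ S.G j)
    (c : R) (l m : ℂ) :
    (newData S).lb l (S.alpha a) ((newData S).lb m b c) =
      (newData S).lb (l+m) ((newData S).lb l a b) (S.alpha c)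
      + sg i j • (newData S).lb m (S.alpha b) ((newData S).lb l a c) := by
  have hc : c = proj S.G 0 c + proj S.G 1 c :=
    ((zmod2_sum fun i' => proj S.G i' c).symm.trans (proj_sum S.G c)).symm
  rw [hc, lb_add2 (newData S) m b, lb_add2 (newData S) l (S.alpha a),
    map_add S.alpha, lb_add2 (newData S) (l+m), lb_add2 (newData S) l a,
    lb_add2 (newData S) m (S.alpha b), smul_add]
  rw [new_jacobi_homog S hcl hcr hassoc hder halpha hbr i j 0 a ha b hb _ (proj_mem S.G 0 c) l m,
      new_jacobi_homog S hcl hcr hassoc hder halpha hbr i j 1 a ha b hb _ (proj_mem S.G 1 c) l m]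
  abel

end jac


end Main

/-- If `(R, α)` is a Hom-associative conformal superalgebra, then the
`λ`-bracket `[a_λ b] := a_λ b - (-1)^{|a||b|} b_{-λ-∂} a` (on homogeneous elements,
extended bilinearly) makes `(R, α)` a Hom-Lie conformal superalgebra. -/
theorem homAssoc_to_homLie (S : Data R) (hS : IsHAssoc S) :
    ∃ S' : Data R, S'.der = S.der ∧ S'.alpha = S.alpha ∧ S'.G = S.G ∧
      (∀ i j, ∀ a ∈ S.G i, ∀ b ∈ S.G j, ∀ l : ℂ,
        S'.lb l a b = S.lb l a b - sg i j • S.lbOp l b a) ∧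
      IsHLCS S' := by
  letI : DirectSum.Decomposition S.G := hS.internal.chooseDecomposition
  refine ⟨newData S, rfl, rfl, rfl, fun i j a ha b hb l => new_lb_homog S ha hb l, ?_⟩
  exact {
    internal := hS.internal
    der_even := hS.der_even
    alpha_even := hS.alpha_even
    alpha_der := hS.alpha_der
    br_grade := new_br_grade S hS.der_even hS.br_grade
    conf_left := new_cl S hS.conf_left hS.conf_right hS.der_even
    conf_right := new_cr S hS.conf_left hS.conf_right hS.der_even
    skew := fun i j a ha b hb l => new_skew S i j a ha b hb l
    jacobi := fun i j a ha b hb c l m =>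
      new_jacobi S hS.conf_left hS.conf_right hS.assoc hS.der_even hS.alpha_even
        hS.br_grade i j a ha b hb c l m }

end HLCS
end
end

section
/- Let (R, α) be a Hom-Lie conformal superalgebra, (ρ, M, β) a representation of R, and M* the dual space of M. Define ρ̃ : R → Cend(M*) by (ρ̃(a)_λ f)(u) = −f(ρ(a)_λ u) for f ∈ M*, u ∈ M, and take β̃ = β acting by precomposition. Then (ρ̃, M*, β̃) is a representation of (R, α) if and only if β ∘ ρ([a_λ b])_{λ+μ} = (−1)^{|a||b|} ρ(a)_λ ∘ ρ(α(b))_μ − ρ(b)_μ ∘ ρ(α(a))_λ for all a, b ∈ R. -/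
noncomputable section

namespace HLCS

variable {R M : Type} [AddCommGroup R] [Module ℂ R] [AddCommGroup M] [Module ℂ M]

/-- The data of a conformal module `(M, β)` over `R`: a `ℤ₂`-graded `ℂ[∂]`-module
together with a map `ρ` sending `a ∈ R` to a conformal linear map on `M`
(encoded via its `λ`-coefficients). -/
structure RepData (R M : Type) [AddCommGroup R] [Module ℂ R]
    [AddCommGroup M] [Module ℂ M] where
  derM : Module.End ℂ M
  beta : Module.End ℂ M
  GM : ZMod 2 → Submodule ℂ M
  rho : R →ₗ[ℂ] M →ₗ[ℂ] (ℕ →₀ M)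

namespace RepData

variable (P : RepData R M)

/-- `ρ(a)_λ m` evaluated at `λ = l`. -/
def ev (l : ℂ) (a : R) (m : M) : M := pev l (P.rho a m)

/-- `ρ(a)_{-l-∂} m`. -/
def evOp (l : ℂ) (a : R) (m : M) : M :=
  pevOp ((-l) • (1 : Module.End ℂ M) - P.derM) (P.rho a m)

end RepData

/-- `(ρ, M, β)` is a representation of the Hom-Lie conformal superalgebra `(R, α)`. -/
structure IsRep (S : Data R) (P : RepData R M) : Prop where
  internal : DirectSum.IsInternal P.GM
  derM_even : ∀ i, ∀ m ∈ P.GM i, P.derM m ∈ P.GM i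
  beta_even : ∀ i, ∀ m ∈ P.GM i, P.beta m ∈ P.GM i
  beta_derM : ∀ m, P.beta (P.derM m) = P.derM (P.beta m)
  rho_grade : ∀ i j, ∀ a ∈ S.G i, ∀ m ∈ P.GM j, ∀ n, P.rho a m n ∈ P.GM (i + j)
  conf_left : ∀ (l : ℂ) (a : R) (m : M), P.ev l (S.der a) m = -l • P.ev l a m
  conf_right : ∀ (l : ℂ) (a : R) (m : M),
    P.ev l a (P.derM m) = P.derM (P.ev l a m) + l • P.ev l a m
  beta_comm : ∀ (l : ℂ) (a : R) (m : M), P.ev l a (P.beta m) = P.beta (P.ev l a m)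
  module_axiom : ∀ i j, ∀ a ∈ S.G i, ∀ b ∈ S.G j, ∀ (u : M) (l m : ℂ),
    P.ev (l + m) (S.lb l a b) (P.beta u) =
      P.ev l (S.alpha a) (P.ev m b u) - sg i j • P.ev m (S.alpha b) (P.ev l a u)

end HLCS
namespace HLCS

variable {R M : Type} [AddCommGroup R] [Module ℂ R] [AddCommGroup M] [Module ℂ M]

section Aux

variable {A B : Type} [AddCommGroup A] [Module ℂ A] [AddCommGroup B] [Module ℂ B]

lemma map_pev (F : A →ₗ[ℂ] B) (l : ℂ) (p : ℕ →₀ A) :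
    F (pev l p) = pev l (p.mapRange F F.map_zero) := by
  rw [pev, pev, map_finsuppSum, Finsupp.sum_mapRange_index (by simp)]
  simp

lemma pev_toPoly (p : ℕ →₀ ℂ) (l : ℂ) :
    pev l p = Polynomial.eval l { toFinsupp := AddMonoidAlgebra.ofCoeff p } := by
  rw [Polynomial.eval_eq_sum, Polynomial.sum, pev, Finsupp.sum]
  simp [Polynomial.coeff, mul_comm]

lemma finsupp_eq_of_pev_eq {p q : ℕ →₀ ℂ} (h : ∀ l : ℂ, pev l p = pev l q) : p = q := by
  have h2 : ({ toFinsupp := AddMonoidAlgebra.ofCoeff p } : Polynomial ℂ) = { toFinsupp := AddMonoidAlgebra.ofCoeff q } :=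
    Polynomial.funext fun l => by rw [← pev_toPoly, ← pev_toPoly]; exact h l
  exact congrArg (fun r => r.toFinsupp.coeff) h2

lemma dual_sep (x y : A) (h : ∀ g : Module.Dual ℂ A, g x = g y) : x = y := by
  have h0 : ∀ g : Module.Dual ℂ A, g (x - y) = 0 := fun g => by simp [h g]
  exact sub_eq_zero.mp ((Module.forall_dual_apply_eq_zero_iff ℂ (x - y)).mp h0)

end Aux

theorem dual_rep_iff (S : Data R) (P : RepData R M)
    (hS : IsHLCS S) (hP : IsRep S P)
    (P' : RepData R (Module.Dual ℂ M))
    (hder : ∀ (f : Module.Dual ℂ M) (m : M), P'.derM f m = -(f (P.derM m)))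
    (hbeta : ∀ (f : Module.Dual ℂ M) (m : M), P'.beta f m = f (P.beta m))
    (hG : ∀ (i : ZMod 2) (f : Module.Dual ℂ M),
      f ∈ P'.GM i ↔ ∀ m ∈ P.GM (i + 1), f m = 0)
    (hrho : ∀ (l : ℂ) (a : R) (f : Module.Dual ℂ M) (m : M),
      P'.ev l a f m = -(f (P.ev l a m))) :
    IsRep S P' ↔
      ∀ i j, ∀ a ∈ S.G i, ∀ b ∈ S.G j, ∀ (l m : ℂ) (u : M),
        P.beta (P.ev (l + m) (S.lb l a b) u) =
          sg i j • P.ev l a (P.ev m (S.alpha b) u) - P.ev m b (P.ev l (S.alpha a) u) := by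
  constructor
  · -- forward
    intro hP' i j a ha b hb l m u
    apply dual_sep
    intro g
    have key := LinearMap.congr_fun (hP'.module_axiom i j a ha b hb g l m) u
    simp only [hrho, hbeta, LinearMap.sub_apply, LinearMap.smul_apply, smul_eq_mul,
      map_sub, map_smul, map_neg, neg_neg] at key ⊢
    linear_combination -key
  · -- backward
    intro H
    -- coefficient formula for P'.rho
    have coeff : ∀ (a : R) (f : Module.Dual ℂ M) (u : M) (n : ℕ),
        P'.rho a f n u = -(f (P.rho a u n)) := by
      intro a f u n
      set F : Module.Dual ℂ M →ₗ[ℂ] ℂ :=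
        { toFun := fun g => g u, map_add' := by intros; simp, map_smul' := by intros; simp }
      have h1 : (P'.rho a f).mapRange F F.map_zero
          = (P.rho a u).mapRange (-f) (by simp) := by
        apply finsupp_eq_of_pev_eq
        intro l
        rw [← map_pev, ← map_pev]
        have := hrho l a f u
        simpa [RepData.ev, F, LinearMap.neg_apply] using this
      have h2 := DFunLike.congr_fun h1 n
      simpa [Finsupp.mapRange_apply, F, LinearMap.neg_apply] using h2
    -- IsCompl for P.GM
    have huniv : (Set.univ : Set (ZMod 2)) = {0, 1} := by
      ext i
      have : i = 0 ∨ i = 1 := by revert i; decide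
      simpa using this
    have hcompl : IsCompl (P.GM 0) (P.GM 1) :=
      (DirectSum.isInternal_submodule_iff_isCompl P.GM (by decide) huniv).mp hP.internal
    have htop : P.GM 0 ⊔ P.GM 1 = ⊤ := codisjoint_iff.mp hcompl.codisjoint
    refine ⟨?_, ?_, ?_, ?_, ?_, ?_, ?_, ?_, ?_⟩
    · -- internal
      refine (DirectSum.isInternal_submodule_iff_isCompl P'.GM (by decide) huniv).mpr ⟨?_, ?_⟩
      · -- disjoint
        rw [Submodule.disjoint_def]
        intro f hf0 hf1
        apply LinearMap.ext
        intro u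
        have hu : u ∈ P.GM 0 ⊔ P.GM 1 := by rw [htop]; trivial
        obtain ⟨x, hx, y, hy, rfl⟩ := Submodule.mem_sup.mp hu
        have e0 : f y = 0 := (hG 0 f).mp hf0 y (by simpa using hy)
        have e1 : f x = 0 := (hG 1 f).mp hf1 x (by
          have : ((1 : ZMod 2) + 1) = 0 := by decide
          rw [this]; exact hx)
        simp [map_add, e0, e1]
      · -- codisjoint
        rw [codisjoint_iff, eq_top_iff]
        intro f _
        set pr0 : M →ₗ[ℂ] M :=
          (P.GM 0).subtype ∘ₗ Submodule.projectionOnto (P.GM 0) (P.GM 1) hcompl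
        set pr1 : M →ₗ[ℂ] M :=
          (P.GM 1).subtype ∘ₗ Submodule.projectionOnto (P.GM 1) (P.GM 0) hcompl.symm
        have hmem0 : f ∘ₗ pr0 ∈ P'.GM 0 := by
          rw [hG]
          intro m hm
          have hm1 : m ∈ P.GM 1 := by simpa using hm
          simp [pr0, Submodule.projectionOnto_apply_of_mem_right hcompl hm1]
        have hmem1 : f ∘ₗ pr1 ∈ P'.GM 1 := by
          rw [hG]
          intro m hm
          have hm0 : m ∈ P.GM 0 := by
            have : ((1 : ZMod 2) + 1) = 0 := by decide
            rwa [this] at hm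
          simp [pr1, Submodule.projectionOnto_apply_of_mem_right hcompl.symm hm0]
        have hsum : f = f ∘ₗ pr0 + f ∘ₗ pr1 := by
          apply LinearMap.ext
          intro u
          have := Submodule.projection_add_projection_eq_self hcompl u
          simp only [LinearMap.add_apply, LinearMap.comp_apply, pr0, pr1,
            Submodule.coe_subtype]
          rw [← map_add]; exact congrArg f this.symm
        rw [hsum]
        exact Submodule.add_mem_sup hmem0 hmem1
    · -- derM_even
      intro i f hf
      rw [hG]
      intro m hm
      rw [hder]
      have : P.derM m ∈ P.GM (i + 1) := hP.derM_even _ _ hm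
      simp [(hG i f).mp hf _ this]
    · -- beta_even
      intro i f hf
      rw [hG]
      intro m hm
      rw [hbeta]
      exact (hG i f).mp hf _ (hP.beta_even _ _ hm)
    · -- beta_derM
      intro f
      apply LinearMap.ext
      intro u
      rw [hbeta, hder, hder, hbeta, hP.beta_derM]
    · -- rho_grade
      intro i j a ha f hf n
      rw [hG]
      intro m hm
      rw [coeff]
      have hz : ∀ i j : ZMod 2, i + (i + j + 1) = j + 1 := by decide
      have : P.rho a m n ∈ P.GM (j + 1) := by
        have := hP.rho_grade i (i + j + 1) a ha m hm n
        rwa [hz i j] at this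
      simp [(hG j f).mp hf _ this]
    · -- conf_left
      intro l a f
      apply LinearMap.ext
      intro u
      rw [LinearMap.smul_apply, hrho, hrho, hP.conf_left]
      simp [smul_eq_mul]
    · -- conf_right
      intro l a f
      apply LinearMap.ext
      intro u
      rw [LinearMap.add_apply, LinearMap.smul_apply, hrho, hder, hder, hrho, hrho,
        hP.conf_right]
      simp only [map_add, map_smul, smul_eq_mul]
      ring
    · -- beta_comm
      intro l a f
      apply LinearMap.ext
      intro u
      rw [hrho, hbeta, hbeta, hrho, hP.beta_comm]
    · -- module_axiom
      intro i j a ha b hb f l m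
      apply LinearMap.ext
      intro u
      rw [LinearMap.sub_apply, LinearMap.smul_apply, hrho, hbeta, hrho, hrho, hrho, hrho,
        H i j a ha b hb l m u]
      simp only [map_sub, map_smul, smul_eq_mul, neg_neg, neg_sub]
end HLCS
end
end

section
/- Let (R, α) be a regular Hom-Lie conformal superalgebra and f : R → R an even ℂ[∂]-linear map commuting with α that is a Hom-Nijenhuis operator. Then for every t ∈ ℂ, the deformed bracket [a_λ b]_t := [a_λ b] + t[a_λ b]_N, where [a_λ b]_N = [f(a)_λ b] + [a_λ f(b)] − f([a_λ b]), makes (R, [·_λ·]_t, α) a Hom-Lie conformal superalgebra. -/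
noncomputable section

namespace HLCS

variable {R : Type} [AddCommGroup R] [Module ℂ R]


section PevLemmas
variable {M : Type} [AddCommGroup M] [Module ℂ M]

lemma pev_eq_s6 (l : ℂ) (p : ℕ →₀ M) :
    pev l p = Finsupp.lsum ℂ (fun n => (l ^ n) • (LinearMap.id : M →ₗ[ℂ] M)) p := rfl

lemma pevOp_eq (T : Module.End ℂ M) (p : ℕ →₀ M) :
    pevOp T p = Finsupp.lsum ℂ (fun n => T ^ n) p := rfl

lemma pev_add (l : ℂ) (p q : ℕ →₀ M) : pev l (p + q) = pev l p + pev l q := by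
  simp only [pev_eq_s6, map_add]

lemma pev_sub (l : ℂ) (p q : ℕ →₀ M) : pev l (p - q) = pev l p - pev l q := by
  simp only [pev_eq_s6, map_sub]

lemma pev_smul (l c : ℂ) (p : ℕ →₀ M) : pev l (c • p) = c • pev l p := by
  simp only [pev_eq_s6, map_smul]

lemma pevOp_add (T : Module.End ℂ M) (p q : ℕ →₀ M) :
    pevOp T (p + q) = pevOp T p + pevOp T q := by simp only [pevOp_eq, map_add]

lemma pevOp_sub (T : Module.End ℂ M) (p q : ℕ →₀ M) :
    pevOp T (p - q) = pevOp T p - pevOp T q := by simp only [pevOp_eq, map_sub]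

lemma pevOp_smul (T : Module.End ℂ M) (c : ℂ) (p : ℕ →₀ M) :
    pevOp T (c • p) = c • pevOp T p := by simp only [pevOp_eq, map_smul]

lemma pev_mapRange (f : M →ₗ[ℂ] M) (l : ℂ) (p : ℕ →₀ M) :
    pev l (Finsupp.mapRange f f.map_zero p) = f (pev l p) := by
  unfold pev
  rw [Finsupp.sum_mapRange_index (fun n => smul_zero _), map_finsuppSum]
  simp only [map_smul]

lemma pevOp_mapRange (f : M →ₗ[ℂ] M) (T : Module.End ℂ M)
    (hc : ∀ x, f (T x) = T (f x)) (p : ℕ →₀ M) :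
    pevOp T (Finsupp.mapRange f f.map_zero p) = f (pevOp T p) := by
  have hpow : ∀ (n : ℕ) (x : M), f ((T ^ n) x) = (T ^ n) (f x) := by
    intro n
    induction n with
    | zero => intro x; simp
    | succ k ih =>
        intro x
        rw [pow_succ, Module.End.mul_apply, ih, hc, Module.End.mul_apply]
  unfold pevOp
  rw [Finsupp.sum_mapRange_index (fun n => map_zero _), map_finsuppSum]
  exact Finsupp.sum_congr fun n _ => (hpow n _).symm

end PevLemmas

lemma Data.lb_add_left (S : Data R) (l : ℂ) (x y b : R) :
    S.lb l (x + y) b = S.lb l x b + S.lb l y b := by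
  unfold Data.lb; rw [map_add, LinearMap.add_apply, pev_add]

lemma Data.lb_sub_left (S : Data R) (l : ℂ) (x y b : R) :
    S.lb l (x - y) b = S.lb l x b - S.lb l y b := by
  unfold Data.lb; rw [map_sub, LinearMap.sub_apply, pev_sub]

lemma Data.lb_smul_left (S : Data R) (l c : ℂ) (x b : R) :
    S.lb l (c • x) b = c • S.lb l x b := by
  unfold Data.lb; rw [map_smul, LinearMap.smul_apply, pev_smul]

lemma Data.lb_add_right (S : Data R) (l : ℂ) (a x y : R) :
    S.lb l a (x + y) = S.lb l a x + S.lb l a y := by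
  unfold Data.lb; rw [map_add, pev_add]

lemma Data.lb_sub_right (S : Data R) (l : ℂ) (a x y : R) :
    S.lb l a (x - y) = S.lb l a x - S.lb l a y := by
  unfold Data.lb; rw [map_sub, pev_sub]

lemma Data.lb_smul_right (S : Data R) (l c : ℂ) (a x : R) :
    S.lb l a (c • x) = c • S.lb l a x := by
  unfold Data.lb; rw [map_smul, pev_smul]

/-- The deformed data `[a_λ b]_t = [a_λ b] + t [a_λ b]_N`. -/
def deform (S : Data R) (f : R →ₗ[ℂ] R) (t : ℂ) : Data R where
  der := S.der
  alpha := S.alpha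
  G := S.G
  br := S.br + t • (S.br ∘ₗ f + S.br.compl₂ f - S.br.compr₂ (Finsupp.mapRange.linearMap f))

lemma deform_br (S : Data R) (f : R →ₗ[ℂ] R) (t : ℂ) (a b : R) :
    (deform S f t).br a b =
      S.br a b + t • (S.br (f a) b + S.br a (f b)
        - Finsupp.mapRange f f.map_zero (S.br a b)) := by
  simp [deform, Finsupp.mapRange.linearMap]; rfl

lemma deform_lb (S : Data R) (f : R →ₗ[ℂ] R) (t : ℂ) (l : ℂ) (a b : R) :
    (deform S f t).lb l a b =
      S.lb l a b + t • (S.lb l (f a) b + S.lb l a (f b) - f (S.lb l a b)) := by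
  unfold Data.lb
  rw [deform_br, pev_add, pev_smul, pev_sub, pev_add, pev_mapRange]

lemma deform_lbOp (S : Data R) (f : R →ₗ[ℂ] R) (t : ℂ)
    (hder : ∀ a, f (S.der a) = S.der (f a)) (l : ℂ) (a b : R) :
    (deform S f t).lbOp l a b =
      S.lbOp l a b + t • (S.lbOp l (f a) b + S.lbOp l a (f b) - f (S.lbOp l a b)) := by
  have hT : ∀ x, f (((-l) • (1 : Module.End ℂ R) - S.der) x)
      = ((-l) • (1 : Module.End ℂ R) - S.der) (f x) := by
    intro x
    simp [LinearMap.sub_apply, LinearMap.smul_apply, map_sub, map_smul, hder]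
  unfold Data.lbOp
  rw [show (deform S f t).der = S.der from rfl, deform_br, pevOp_add, pevOp_smul,
    pevOp_sub, pevOp_add, pevOp_mapRange _ _ hT]

/-- Let `(R, α)` be a regular Hom-Lie conformal superalgebra and
`f : R → R` an even `ℂ[∂]`-linear map commuting with `α` that is a Hom-Nijenhuis
operator.  Then for every `t : ℂ`, the deformed bracket
`[a_λ b]_t = [a_λ b] + t [a_λ b]_N`, where
`[a_λ b]_N = [f(a)_λ b] + [a_λ f(b)] - f([a_λ b])`, makes `(R, α)` a Hom-Lie
conformal superalgebra. -/
theorem nijenhuis_deformation (S : Data R) (hS : IsHLCS S)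
    (hmult : S.Mult) (hbij : Function.Bijective S.alpha)
    (f : R →ₗ[ℂ] R)
    (heven : ∀ i, ∀ a ∈ S.G i, f a ∈ S.G i)
    (hder : ∀ a, f (S.der a) = S.der (f a))
    (halpha : ∀ a, f (S.alpha a) = S.alpha (f a))
    (hNij : ∀ (l : ℂ) (a b : R),
      S.lb l (f a) (f b) = f (S.lb l (f a) b + S.lb l a (f b) - f (S.lb l a b)))
    (t : ℂ) :
    ∃ S' : Data R, S'.der = S.der ∧ S'.alpha = S.alpha ∧ S'.G = S.G ∧
      (∀ (l : ℂ) (a b : R),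
        S'.lb l a b =
          S.lb l a b + t • (S.lb l (f a) b + S.lb l a (f b) - f (S.lb l a b))) ∧
      IsHLCS S' := by
  refine ⟨deform S f t, rfl, rfl, rfl, fun l a b => deform_lb S f t l a b, ?_⟩
  constructor
  · exact hS.internal
  · exact hS.der_even
  · exact hS.alpha_even
  · exact hS.alpha_der
  · intro i j a ha b hb n
    simp only [deform_br, Finsupp.add_apply, Finsupp.smul_apply, Finsupp.sub_apply,
      Finsupp.mapRange_apply]
    exact add_mem (hS.br_grade i j a ha b hb n)
      (Submodule.smul_mem _ _ (sub_mem
        (add_mem (hS.br_grade i j (f a) (heven i a ha) b hb n)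
          (hS.br_grade i j a ha (f b) (heven j b hb) n))
        (heven _ _ (hS.br_grade i j a ha b hb n))))
  · intro l a b
    simp only [show (deform S f t).der = S.der from rfl, deform_lb, hder,
      hS.conf_left, map_add, map_sub, map_smul]
    module
  · intro l a b
    simp only [show (deform S f t).der = S.der from rfl, deform_lb, hder,
      hS.conf_right, map_add, map_sub, map_smul]
    module
  · intro i j a ha b hb l
    have K0 := hS.skew i j a ha b hb l
    have K1 := hS.skew i j (f a) (heven i a ha) b hb l
    have K2 := hS.skew i j a ha (f b) (heven j b hb) l
    rw [deform_lb, deform_lbOp S f t hder, K0, K1, K2]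
    simp only [map_smul]
    module
  · intro i j a ha b hb c l m
    have ha' := heven i a ha
    have hb' := heven j b hb
    have J0 := hS.jacobi i j a ha b hb c l m
    have J1 := hS.jacobi i j (f a) ha' b hb c l m
    have J2 := hS.jacobi i j a ha (f b) hb' c l m
    have J3 := hS.jacobi i j a ha b hb (f c) l m
    have J12 := hS.jacobi i j (f a) ha' (f b) hb' c l m
    have J13 := hS.jacobi i j (f a) ha' b hb (f c) l m
    have J23 := hS.jacobi i j a ha (f b) hb' (f c) l m
    have fJ0 := congrArg f J0
    have fJ1 := congrArg f J1
    have fJ2 := congrArg f J2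
    have fJ3 := congrArg f J3
    simp only [map_add, map_smul] at fJ0 fJ1 fJ2 fJ3
    have ffJ0 := congrArg f fJ0
    simp only [map_add, map_smul] at ffJ0
    have N1 := hNij l (S.alpha a) (S.lb m b c)
    have N2 := hNij (l + m) (S.lb l a b) (S.alpha c)
    have N3 := hNij m (S.alpha b) (S.lb l a c)
    simp only [map_add, map_sub, halpha] at N1 N2 N3
    have H2 := congrArg (fun x => S.lb l (S.alpha a) x) (hNij m b c)
    simp only [map_add, map_sub, Data.lb_add_right, Data.lb_sub_right] at H2
    have H4 := congrArg (fun x => S.lb (l + m) x (S.alpha c)) (hNij l a b)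
    simp only [map_add, map_sub, Data.lb_add_left, Data.lb_sub_left] at H4
    have H6 := congrArg (fun x => S.lb m (S.alpha b) x) (hNij l a c)
    simp only [map_add, map_sub, Data.lb_add_right, Data.lb_sub_right] at H6
    simp only [show (deform S f t).alpha = S.alpha from rfl, deform_lb,
      Data.lb_add_left, Data.lb_add_right, Data.lb_sub_left, Data.lb_sub_right,
      Data.lb_smul_left, Data.lb_smul_right, map_add, map_sub, map_smul, halpha]
    linear_combination (norm := module) J0 + t • (J1 + J2 + J3 - fJ0)
      + (t ^ 2) • (J12 + J13 + J23 - fJ1 - fJ2 - fJ3 + ffJ0 - N1 - H2 + N2 + H4)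
      + (t ^ 2 * sg i j) • (N3 + H6)

end HLCS
end
end
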